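/- Let n = 2k+1 be odd and let p_{ij} (1 ≤ i < j ≤ n) be nonzero scalars. The polynomial Q = Σ ± (∏_{i,j} p_{a_i a_j})(∏_{r,s} p_{b_r b_s}) x_{a₀}⋯x_{a_k} y_{b₁}⋯y_{b_k}, summed over partitions {1,…,n} = {a₀,…,a_k} ⊔ {b₁,…,b_k}, which equals the determinant of the matrix (1.7) built from a 2×n matrix with Plücker coordinates p_{ij}, is invariant under the substitution y_i ↦ y_i + λ_i x_i for every λ in the kernel relation space G = rowspan of the 2×n matrix. -/

import Mathlib

open Matrix

theorem det_eq_of_rowops {ι R : Type*} [Fintype ι] [DecidableEq ι] [CommRing R]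
    (S : Finset ι) (M M' : Matrix ι ι R)
    (h1 : ∀ i, i ∉ S → M' i = M i)
    (h2 : ∀ i ∈ S, ∃ d : ι → R, d i = 1 ∧ (∀ j ∈ S, j ≠ i → d j = 0) ∧
      M' i = ∑ j, d j • M j) :
    M'.det = M.det := by
  induction S using Finset.induction_on generalizing M' with
  | empty => rw [show M' = M from funext fun i => h1 i (Finset.notMem_empty i)]
  | @insert i0 S hiS ih =>
    obtain ⟨d, hdi, hd0, hsum⟩ := h2 i0 (Finset.mem_insert_self i0 S)
    set M'' : Matrix ι ι R := M'.updateRow i0 (M i0) with hM''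
    have hM''ne : ∀ j, j ≠ i0 → M'' j = M' j := fun j hj => updateRow_ne hj
    have hdet2 : M''.det = M.det := by
      apply ih
      · intro j hj
        rcases eq_or_ne j i0 with rfl | hji
        · simp [hM'']
        · rw [hM''ne j hji]; exact h1 j (by simp [hji, hj])
      · intro j hj
        have hji : j ≠ i0 := fun h => hiS (h ▸ hj)
        obtain ⟨e, hei, he0, hesum⟩ := h2 j (Finset.mem_insert_of_mem hj)
        exact ⟨e, hei, fun j' hj' hj'j => he0 j' (Finset.mem_insert_of_mem hj') hj'j, by
          rw [hM''ne j hji, hesum]⟩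
    have key : M' = M''.updateRow i0 (∑ j, d j • M'' j) := by
      ext r c
      rcases eq_or_ne r i0 with rfl | hri
      · rw [updateRow_self]
        have hss : (∑ j, d j • M'' j) = ∑ j, d j • M j := by
          apply Finset.sum_congr rfl
          intro j' _
          rcases eq_or_ne j' r with rfl | hj'i
          · simp [hM'']
          · by_cases hjS : j' ∈ S
            · rw [hd0 j' (Finset.mem_insert_of_mem hjS) hj'i]; simp
            · rw [hM''ne j' hj'i, h1 j' (by simp [hj'i, hjS])]
        rw [hss, ← hsum]
      · rw [updateRow_ne hri, hM''ne r hri]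
    rw [key, det_updateRow_sum, hdet2, hdi, one_smul]


open MvPolynomial

/-- For `n = 2k+1`, the Castravet–Tevelev determinant `Q_{1…n}` (the determinant
of the `(2k+1)×(2k+1)` matrix whose rows alternate `b₁ₗ^{k−m} b₂ₗ^m xₗ` and
`b₁ₗ^{k−1−m} b₂ₗ^m yₗ`) is invariant under the Nagata action `yᵢ ↦ yᵢ + λᵢ xᵢ` for every
`λ` in the row span `G` of the `2×n` matrix `b`. -/
theorem stmt13 (K : Type*) [Field K] (k : ℕ)
    (b : Fin 2 → Fin (2 * k + 1) → K)
    (hpl : ∀ i j : Fin (2 * k + 1), i ≠ j → b 0 i * b 1 j - b 0 j * b 1 i ≠ 0)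
    (M : Matrix (Fin (2 * k + 1)) (Fin (2 * k + 1))
      (MvPolynomial (Fin (2 * k + 1) ⊕ Fin (2 * k + 1)) K))
    (hM : ∀ r l, M r l =
      if (r : ℕ) % 2 = 0 then
        C (b 0 l ^ (k - (r : ℕ) / 2) * b 1 l ^ ((r : ℕ) / 2)) * X (Sum.inl l)
      else
        C (b 0 l ^ (k - 1 - (r : ℕ) / 2) * b 1 l ^ ((r : ℕ) / 2)) * X (Sum.inr l))
    (lam : Fin (2 * k + 1) → K)
    (hlam : ∃ c : Fin 2 → K, lam = fun l => c 0 * b 0 l + c 1 * b 1 l) :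
    MvPolynomial.aeval
        (Sum.elim (fun i => X (Sum.inl i))
          (fun i => X (Sum.inr i) + C (lam i) * X (Sum.inl i)))
        M.det
      = M.det := by
  obtain ⟨c, hc⟩ := hlam
  set φ := Sum.elim
      (fun i : Fin (2 * k + 1) => (X (Sum.inl i) :
        MvPolynomial (Fin (2 * k + 1) ⊕ Fin (2 * k + 1)) K))
      (fun i => X (Sum.inr i) + C (lam i) * X (Sum.inl i)) with hφ
  rw [AlgHom.map_det]
  set M' := (aeval φ).mapMatrix M with hM'
  apply det_eq_of_rowops (Finset.univ.filter (fun i : Fin (2 * k + 1) => (i : ℕ) % 2 = 1))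
  · -- even rows unchanged
    intro i hi
    have hie : (i : ℕ) % 2 = 0 := by
      simp only [Finset.mem_filter, Finset.mem_univ, true_and] at hi; omega
    funext l
    simp [hM', hM, hie, hφ]
  · -- odd rows: linear combination
    intro i hi
    have hio : (i : ℕ) % 2 = 1 := by
      simp only [Finset.mem_filter, Finset.mem_univ, true_and] at hi; exact hi
    have hib : (i : ℕ) < 2 * k + 1 := i.isLt
    have ha' : (i : ℕ) - 1 < 2 * k + 1 := by omega
    have hb' : (i : ℕ) + 1 < 2 * k + 1 := by omega
    set a : Fin (2 * k + 1) := ⟨(i : ℕ) - 1, ha'⟩ with hadef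
    set bb : Fin (2 * k + 1) := ⟨(i : ℕ) + 1, hb'⟩ with hbdef
    have hai : a ≠ i := Fin.ne_of_val_ne (by simp only [hadef]; omega)
    have hbi : bb ≠ i := Fin.ne_of_val_ne (by simp only [hbdef]; omega)
    have hab : a ≠ bb := Fin.ne_of_val_ne (by simp only [hadef, hbdef]; omega)
    set D : Fin (2 * k + 1) → MvPolynomial (Fin (2 * k + 1) ⊕ Fin (2 * k + 1)) K :=
      fun j => (if j = i then 1 else 0) + (if j = a then C (c 0) else 0)
        + (if j = bb then C (c 1) else 0) with hD
    refine ⟨D, ?_, ?_, ?_⟩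
    · simp [hD, hai.symm, hbi.symm]
    · intro j hj hji
      have hjo : (j : ℕ) % 2 = 1 := by
        simp only [Finset.mem_filter, Finset.mem_univ, true_and] at hj; exact hj
      have hja : j ≠ a := by simp [hadef, Fin.ext_iff]; omega
      have hjb : j ≠ bb := by simp [hbdef, Fin.ext_iff]; omega
      simp [hD, hji, hja, hjb]
    · have hsum : (∑ j, D j • M j)
          = M i + (C (c 0) : MvPolynomial (Fin (2 * k + 1) ⊕ Fin (2 * k + 1)) K) • M a
            + (C (c 1) : MvPolynomial (Fin (2 * k + 1) ⊕ Fin (2 * k + 1)) K) • M bb := by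
        simp only [hD, add_smul, Finset.sum_add_distrib, ite_smul, zero_smul, one_smul,
          Finset.sum_ite_eq', Finset.sum_ite_eq, Finset.mem_univ, if_true]
        congr 2
        exact (Finset.sum_ite_eq' Finset.univ i (fun x => M x)).trans (if_pos (Finset.mem_univ i))
      rw [hsum]
      funext l
      have h1 : ((a : ℕ)) % 2 = 0 := by simp only [hadef]; omega
      have h2 : ((bb : ℕ)) % 2 = 0 := by simp only [hbdef]; omega
      have h3 : ((a : ℕ)) / 2 = (i : ℕ) / 2 := by simp only [hadef]; omega
      have h4 : ((bb : ℕ)) / 2 = (i : ℕ) / 2 + 1 := by simp only [hbdef]; omega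
      have hexp1 : k - (i : ℕ) / 2 = (k - 1 - (i : ℕ) / 2) + 1 := by omega
      have hexp2 : k - ((i : ℕ) / 2 + 1) = k - 1 - (i : ℕ) / 2 := by omega
      have hMi : M i l = C (b 0 l ^ (k - 1 - (i : ℕ) / 2) * b 1 l ^ ((i : ℕ) / 2))
          * X (Sum.inr l) := by rw [hM]; simp [hio]
      have hMa : M a l = C (b 0 l ^ ((k - 1 - (i : ℕ) / 2) + 1) * b 1 l ^ ((i : ℕ) / 2))
          * X (Sum.inl l) := by rw [hM, if_pos h1, h3, hexp1]
      have hMb : M bb l = C (b 0 l ^ (k - 1 - (i : ℕ) / 2) * b 1 l ^ ((i : ℕ) / 2 + 1))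
          * X (Sum.inl l) := by rw [hM, if_pos h2, h4, hexp2]
      have hL : M' i l = aeval φ (M i l) := rfl
      rw [Pi.add_apply, Pi.add_apply, Pi.smul_apply, Pi.smul_apply, hL, hMi, hMa, hMb]
      simp only [_root_.map_mul, aeval_C, aeval_X, hφ, Sum.elim_inr, algebraMap_eq, smul_eq_mul]
      rw [hc]
      simp only [_root_.map_mul, map_add, map_pow, pow_succ]
      ring
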